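/- arXiv:2202.13091 — 3 statements merged into one kernel-verified Lean document; each statement's English description precedes it below -/
import Mathlib

section
/- Let (X, σ, ρ) be a cubic combinatorial map of genus 0 (a plane trivalent graph). Then the Penrose number P of the map, defined as the sum over all Tait colorings f of s(f), where s(f) = 1 if n⁺(f) ≡ n⁻(f) (mod 4) and s(f) = −1 otherwise, equals the total number of Tait colorings of the map. -/
/-- A combinatorial map on a finite set `X` of darts: `sigma` is a fixed-point-free
involution whose orbits are the edges, `rho` is a permutation whose orbits are the
vertices (the counterclockwise cyclic order of darts around each vertex). -/
structure CombMap (X : Type) [Fintype X] where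
  sigma : Equiv.Perm X
  rho : Equiv.Perm X
  sigma_invol : sigma * sigma = 1
  sigma_fixfree : ∀ x, sigma x ≠ x

/-- The number of orbits of the action on `X` of a subgroup of permutations of `X`. -/
noncomputable def orbitCount {X : Type} [Fintype X] (S : Subgroup (Equiv.Perm X)) : ℕ :=
  Nat.card (MulAction.orbitRel.Quotient S X)

namespace CombMap

variable {X : Type} [Fintype X] (m : CombMap X)

/-- `V`: the number of vertices, i.e. orbits of `rho`. -/
noncomputable def numVertices : ℕ := orbitCount (Subgroup.zpowers m.rho)

/-- `E`: the number of edges, i.e. orbits of `sigma`. -/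
noncomputable def numEdges : ℕ := orbitCount (Subgroup.zpowers m.sigma)

/-- `F`: the number of faces, i.e. orbits of `sigma ∘ rho`. -/
noncomputable def numFaces : ℕ := orbitCount (Subgroup.zpowers (m.sigma * m.rho))

/-- `C`: the number of connected components, i.e. orbits of the subgroup
generated by `sigma` and `rho`. -/
noncomputable def numComponents : ℕ := orbitCount (Subgroup.closure {m.sigma, m.rho})

/-- The map is cubic (trivalent): every vertex consists of exactly 3 darts. -/
def IsCubic : Prop := m.rho ^ 3 = 1 ∧ ∀ x, m.rho x ≠ x

/-- Genus 0 (plane): `V - E + F = 2C`, written additively over `ℕ`. -/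
def IsGenusZero : Prop := m.numVertices + m.numFaces = m.numEdges + 2 * m.numComponents

/-- A Tait coloring, encoded as a function on darts with values in `Fin 3`
(the colors `0, 1, 2` stand for `1, 2, 3`) that is constant on each edge
`{x, sigma x}` and assigns pairwise distinct colors to the three edges
containing the three darts `x, rho x, rho² x` of each vertex. -/
def IsTaitColoring (f : X → Fin 3) : Prop :=
  (∀ x, f (m.sigma x) = f x) ∧
  (∀ x, f (m.rho x) ≠ f x ∧ f (m.rho (m.rho x)) ≠ f x ∧ f (m.rho (m.rho x)) ≠ f (m.rho x))

/-- The dart `x` is positive with respect to `f`: reading the colors of the edges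
containing `x`, `rho⁻¹ x`, `rho⁻² x` in that (clockwise) order yields the cyclic
sequence `(1,2,3)`, i.e. `(0,1,2)` cyclically in `Fin 3`.  A vertex of a cubic map
is positive iff all three of its darts are positive darts. -/
def PositiveDart (f : X → Fin 3) (x : X) : Prop :=
  f (m.rho⁻¹ x) = f x + 1 ∧ f (m.rho⁻¹ (m.rho⁻¹ x)) = f x + 2

/-- The dart `x` is negative with respect to `f`: reading the colors at
`x`, `rho⁻¹ x`, `rho⁻² x` yields the cyclic sequence `(1,3,2)`. -/
def NegativeDart (f : X → Fin 3) (x : X) : Prop :=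
  f (m.rho⁻¹ x) = f x + 2 ∧ f (m.rho⁻¹ (m.rho⁻¹ x)) = f x + 1

/-- `n⁺(f)`: the number of positive vertices with respect to `f`.  In a cubic map
each positive vertex contains exactly three (positive) darts, so we divide by 3. -/
noncomputable def nplus (f : X → Fin 3) : ℕ :=
  Nat.card {x : X // m.PositiveDart f x} / 3

/-- `n⁻(f)`: the number of negative vertices with respect to `f`. -/
noncomputable def nminus (f : X → Fin 3) : ℕ :=
  Nat.card {x : X // m.NegativeDart f x} / 3

/-- The sign `s(f)` of a Tait coloring `f`: `1` if `n⁺(f) ≡ n⁻(f) (mod 4)`,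
and `-1` otherwise. -/
noncomputable def sign (f : X → Fin 3) : ℤ :=
  if m.nplus f ≡ m.nminus f [MOD 4] then 1 else -1

end CombMap


set_option linter.unusedSectionVars false


namespace PenroseAux

open Finset

abbrev F2 := ZMod 2
abbrev K4 := ZMod 2 × ZMod 2

def iota : Fin 3 → K4
  | 0 => (0, 1)
  | 1 => (1, 0)
  | 2 => (1, 1)

/-- numeric code of a Klein-group element -/
def knum : K4 → ℕ := fun a => 2 * a.1.val + a.2.val

def wt : ℕ → ℕ → ZMod 4
  | 1, 2 => 1
  | 2, 1 => 3
  | 1, 3 => 3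
  | 3, 1 => 1
  | 2, 3 => 1
  | 3, 2 => 3
  | _, _ => 0

def w (a b : K4) : ZMod 4 := wt (knum a) (knum b)

lemma w_antisym : ∀ a b : K4, w a b + w b a = 0 := by decide

set_option synthInstance.maxHeartbeats 2000000 in
set_option synthInstance.maxSize 2048 in
set_option maxHeartbeats 2000000 in
lemma key : ∀ (a b c : K4) (p q r : Fin 3), iota p = a + c → iota q = b + a → iota r = c + b →
    ((r = p + 1 ∧ q = p + 2) ∧ w a b + w b c + w c a = 1) ∨
    ((r = p + 2 ∧ q = p + 1) ∧ w a b + w b c + w c a = -1) := by decide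

lemma notboth : ∀ p q r : Fin 3, ¬((r = p + 1 ∧ q = p + 2) ∧ (r = p + 2 ∧ q = p + 1)) := by decide

lemma iota_sum : ∀ p q r : Fin 3, q ≠ p → r ≠ p → r ≠ q → iota p + iota q + iota r = 0 := by decide




open Finset

variable {X : Type} [Fintype X]

/-- The subgroup of permutations leaving a function invariant. -/
def stab (g : X → F2) : Subgroup (Equiv.Perm X) where
  carrier := {u | ∀ x, g (u x) = g x}
  one_mem' := fun _ => rfl
  mul_mem' := fun {u v} hu hv x => by
    have h1 : g (u (v x)) = g (v x) := hu (v x)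
    have h2 : g (v x) = g x := hv x
    simpa [Equiv.Perm.mul_apply] using h1.trans h2
  inv_mem' := fun {u} hu x => by
    have := hu (u⁻¹ x)
    simpa using this.symm

/-- Submodule of functions invariant under a subgroup of permutations. -/
def invSub (S : Subgroup (Equiv.Perm X)) : Submodule F2 (X → F2) where
  carrier := {g | ∀ u ∈ S, ∀ x, g (u x) = g x}
  add_mem' := fun {a b} ha hb u hu x => by simp [ha u hu x, hb u hu x]
  zero_mem' := fun _ _ _ => rfl
  smul_mem' := fun c g hg u hu x => by simp [hg u hu x]

lemma mem_invSub_closure {T : Set (Equiv.Perm X)} {g : X → F2} :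
    g ∈ invSub (Subgroup.closure T) ↔ ∀ u ∈ T, ∀ x, g (u x) = g x := by
  constructor
  · intro h u hu x; exact h u (Subgroup.subset_closure hu) x
  · intro h u hu x
    have hle : Subgroup.closure T ≤ stab g := (Subgroup.closure_le _).mpr (fun v hv => h v hv)
    exact hle hu x

lemma mem_invSub_zpowers {π : Equiv.Perm X} {g : X → F2} :
    g ∈ invSub (Subgroup.zpowers π) ↔ ∀ x, g (π x) = g x := by
  rw [Subgroup.zpowers_eq_closure, mem_invSub_closure]
  simp

lemma finrank_invSub (S : Subgroup (Equiv.Perm X)) :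
    Module.finrank F2 (invSub S) = orbitCount S := by
  classical
  letI : Fintype (MulAction.orbitRel.Quotient S X) := Fintype.ofFinite _
  set Q := MulAction.orbitRel.Quotient S X with hQ
  let mk : X → Q := Quotient.mk''
  have hsurj : Function.Surjective mk := fun q => Quotient.inductionOn' q (fun x => ⟨x, rfl⟩)
  let L : (Q → F2) →ₗ[F2] (X → F2) := LinearMap.funLeft F2 F2 mk
  have hinj : Function.Injective L := LinearMap.funLeft_injective_of_surjective _ _ _ hsurj
  have hrange : LinearMap.range L = invSub S := by
    apply le_antisymm
    · rintro _ ⟨h, rfl⟩ u hu x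
      show h (mk (u x)) = h (mk x)
      congr 1
      apply Quotient.sound'
      rw [MulAction.orbitRel_apply]
      exact ⟨(⟨u, hu⟩ : S), rfl⟩
    · intro g hg
      refine ⟨Quotient.lift g ?_, ?_⟩
      · intro a b hab
        have hab' : a ∈ MulAction.orbit S b := hab
        obtain ⟨u, hu⟩ := hab'
        have : ((u : Equiv.Perm X)) b = a := hu
        rw [← this]
        exact hg u.1 u.2 b
      · funext x; rfl
  have h1 : Module.finrank F2 (LinearMap.range L) = Module.finrank F2 (Q → F2) :=
    LinearMap.finrank_range_of_inj hinj
  rw [hrange] at h1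
  rw [h1, Module.finrank_pi, orbitCount, Nat.card_eq_fintype_card]

lemma three_dvd_card (e : Equiv.Perm X) (h3 : ∀ x, e (e (e x)) = x) (hf : ∀ x, e x ≠ x) :
    ∀ (n : ℕ) (s : Finset X), s.card ≤ n → (∀ x ∈ s, e x ∈ s) → 3 ∣ s.card := by
  classical
  intro n
  induction n with
  | zero => intro s h _; interval_cases h' : s.card; simp
  | succ n ih =>
    intro s hle hs
    rcases s.eq_empty_or_nonempty with rfl | ⟨x, hx⟩
    · simp
    · have hex : e x ∈ s := hs x hx
      have heex : e (e x) ∈ s := hs _ hex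
      have d1 : e x ≠ x := hf x
      have d2 : e (e x) ≠ x := by
        intro h
        have := congrArg e h
        rw [h3 x] at this
        exact hf x this.symm  -- this : e (e (e x)) = e x i.e. x = e x
      have d3 : e (e x) ≠ e x := hf (e x)
      set t : Finset X := {x, e x, e (e x)} with ht
      have htcard : t.card = 3 := by
        rw [ht, card_insert_of_notMem (by simp [d1.symm, d2.symm]),
          card_insert_of_notMem (by simp [d3.symm]), card_singleton]
      have hts : t ⊆ s := by
        intro y hy
        rw [ht] at hy
        simp only [mem_insert, mem_singleton] at hy
        rcases hy with rfl | rfl | rfl <;> assumption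
      have hcard' : (s \ t).card = s.card - 3 := by rw [card_sdiff_of_subset hts, htcard]
      have hinv : ∀ y ∈ s \ t, e y ∈ s \ t := by
        intro y hy
        rw [mem_sdiff] at hy ⊢
        obtain ⟨hys, hyt⟩ := hy
        refine ⟨hs y hys, ?_⟩
        rw [ht]
        simp only [mem_insert, mem_singleton]
        push_neg
        refine ⟨?_, ?_, ?_⟩
        · intro h; apply hyt; rw [ht]
          have : y = e (e x) := by
            have := congrArg (fun z => e (e z)) h
            simpa [h3 y] using this
          simp [this]
        · intro h; apply hyt; rw [ht]; simp [e.injective h]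
        · intro h; apply hyt; rw [ht]; simp [e.injective h]
      have hle' : (s \ t).card ≤ n := by
        have h3le : 3 ≤ s.card := htcard ▸ card_le_card hts
        omega
      have := ih (s \ t) hle' hinv
      rw [hcard'] at this
      have h3le : 3 ≤ s.card := htcard ▸ card_le_card hts
      omega


variable {X : Type} [Fintype X]

open scoped Classical in
open scoped Classical in
noncomputable def vd (z x : X) : F2 := if z = x then 1 else 0

noncomputable def vind (ρ : Equiv.Perm X) (z x : X) : F2 :=
  vd z x + vd z (ρ x) + vd z (ρ (ρ x))

def memVert (ρ : Equiv.Perm X) (z x : X) : Prop :=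
  x = z ∨ x = ρ z ∨ x = ρ (ρ z)

lemma vd_congr {z x z' x' : X} (h : z = x ↔ z' = x') : vd z x = vd z' x' := by
  classical
  unfold vd; exact if_congr h rfl rfl

lemma vd_pos {z x : X} (h : z = x) : vd z x = 1 := by
  classical
  unfold vd; exact if_pos h
lemma vd_neg {z x : X} (h : z ≠ x) : vd z x = 0 := by
  classical
  unfold vd; exact if_neg h

variable {ρ : Equiv.Perm X} (hρ3 : ∀ x, ρ (ρ (ρ x)) = x) (hρf : ∀ x, ρ x ≠ x)

lemma vd_rho_left (z x : X) : vd (ρ z) (ρ x) = vd z x :=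
  vd_congr ρ.injective.eq_iff

section
include hρ3

lemma vd_shift (z x : X) : vd z (ρ x) = vd (ρ (ρ z)) x := by
  refine vd_congr ⟨?_, ?_⟩
  · rintro rfl; exact hρ3 x
  · rintro rfl; exact (hρ3 z).symm

lemma vind_rho (z x : X) : vind ρ z (ρ x) = vind ρ z x := by
  unfold vind
  rw [hρ3 x]
  ring

lemma vind_rho_left (z x : X) : vind ρ (ρ z) x = vind ρ z x := by
  unfold vind
  rw [show vd (ρ z) (ρ x) = vd z x from vd_rho_left z x,
    show vd (ρ z) (ρ (ρ x)) = vd z (ρ x) from vd_rho_left z (ρ x),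
    show vd (ρ z) x = vd z (ρ (ρ x)) from vd_congr ⟨fun h => by rw [← h]; exact (hρ3 z).symm,
      fun h => by rw [h]; exact hρ3 x⟩]
  ring

lemma memVert_symm {z x : X} (h : memVert ρ z x) : memVert ρ x z := by
  rcases h with rfl | rfl | rfl
  · exact Or.inl rfl
  · exact Or.inr (Or.inr (hρ3 z).symm)
  · exact Or.inr (Or.inl (hρ3 z).symm)

lemma memVert_trans {a b c : X} (h1 : memVert ρ a b) (h2 : memVert ρ b c) : memVert ρ a c := by
  unfold memVert at *
  rcases h1 with rfl | rfl | rfl <;> rcases h2 with rfl | rfl | rfl <;> simp [hρ3]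

include hρf

lemma rho2_ne (z : X) : ρ (ρ z) ≠ z := by
  intro h
  have := congrArg ρ h
  rw [hρ3 z] at this
  exact hρf z this.symm

lemma vind_eq_one {z x : X} (h : memVert ρ z x) : vind ρ z x = 1 := by
  rcases h with rfl | rfl | rfl
  · unfold vind
    rw [vd_pos rfl, vd_neg (fun h => hρf x h.symm), vd_neg (fun h => rho2_ne hρ3 hρf x h.symm)]
    norm_num
  · unfold vind
    rw [hρ3 z, vd_neg (fun h => hρf z h.symm), vd_neg (fun h => rho2_ne hρ3 hρf z h.symm),
      vd_pos rfl]
    norm_num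
  · unfold vind
    rw [hρ3 z, vd_neg (fun h => rho2_ne hρ3 hρf z h.symm), vd_pos rfl,
      vd_neg (fun h => hρf z h.symm)]
    norm_num

lemma vind_eq_zero {z x : X} (h : ¬ memVert ρ z x) : vind ρ z x = 0 := by
  unfold memVert at h
  push_neg at h
  obtain ⟨h1, h2, h3⟩ := h
  unfold vind
  rw [vd_neg (fun hh => h1 hh.symm), vd_neg ?_, vd_neg ?_]
  · norm_num
  · intro hh
    apply h2
    rw [hh]
    exact (hρ3 x).symm
  · intro hh
    apply h3
    rw [hh]
    exact (hρ3 x).symm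

lemma vind_ne_vert {z x : X} (h : ¬ memVert ρ z x) : vind ρ x z = 0 := by
  apply vind_eq_zero hρ3 hρf
  intro hmem
  exact h (memVert_symm hρ3 hmem)

end

variable {X : Type} [Fintype X] (σ ρ : Equiv.Perm X)

noncomputable def delta : (X → F2) →ₗ[F2] (X → F2) :=
  LinearMap.id + LinearMap.funLeft F2 F2 ⇑σ

lemma delta_apply (h : X → F2) (x : X) : delta σ h x = h x + h (σ x) := rfl

noncomputable def sV : (X → F2) →ₗ[F2] (X → F2) :=
  LinearMap.id + LinearMap.funLeft F2 F2 ⇑ρ + LinearMap.funLeft F2 F2 (⇑ρ ∘ ⇑ρ)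

lemma sV_apply (g : X → F2) (x : X) : sV ρ g x = g x + g (ρ x) + g (ρ (ρ x)) := rfl

abbrev Qc := MulAction.orbitRel.Quotient (Subgroup.closure {σ, ρ}) X

noncomputable def mkc : X → Qc σ ρ := Quotient.mk''

open scoped Classical in
noncomputable def qC : (X → F2) →ₗ[F2] (Qc σ ρ → F2) where
  toFun g := fun O => ∑ x ∈ univ.filter (fun x => mkc σ ρ x = O), g x
  map_add' g h := by funext O; exact Finset.sum_add_distrib
  map_smul' c g := by funext O; simp [Finset.mul_sum]

lemma mkc_eq_iff (x y : X) : mkc σ ρ x = mkc σ ρ y ↔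
    x ∈ MulAction.orbit (Subgroup.closure {σ, ρ}) y := by
  constructor
  · intro h
    have := Quotient.exact' h
    rwa [MulAction.orbitRel_apply] at this
  · intro h
    apply Quotient.sound'
    rwa [MulAction.orbitRel_apply]

lemma mkc_apply_mem (u : Equiv.Perm X) (hu : u ∈ Subgroup.closure {σ, ρ}) (x : X) :
    mkc σ ρ (u x) = mkc σ ρ x := by
  rw [mkc_eq_iff]
  exact ⟨(⟨u, hu⟩ : Subgroup.closure {σ, ρ}), rfl⟩

lemma mkc_sigma (x : X) : mkc σ ρ (σ x) = mkc σ ρ x :=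
  mkc_apply_mem σ ρ σ (Subgroup.subset_closure (Set.mem_insert _ _)) x

lemma mkc_rho (x : X) : mkc σ ρ (ρ x) = mkc σ ρ x :=
  mkc_apply_mem σ ρ ρ (Subgroup.subset_closure (Set.mem_insert_of_mem _ rfl)) x


end PenroseAux
section P5
namespace PenroseAux
open Finset
variable {X : Type} [Fintype X] (σ ρ : Equiv.Perm X)

lemma F2_add_add : ∀ a : F2, a + a + a = a := by decide
lemma F2_two : ∀ a : F2, a + a = 0 := by decide
lemma F2_ne_zero : ∀ a : F2, a ≠ 0 → a = 1 := by decide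

open scoped Classical in
lemma qC_vind (hρ3 : ∀ x, ρ (ρ (ρ x)) = x) (z : X) (O : Qc σ ρ) :
    qC σ ρ (vind ρ z) O = if mkc σ ρ z = O then 1 else 0 := by
  have key1 : ∀ (y : X), (∑ x ∈ univ.filter (fun x => mkc σ ρ x = O), vd y x)
      = if mkc σ ρ y = O then 1 else 0 := by
    intro y
    unfold vd
    rw [Finset.sum_ite_eq]
    congr 1
    simp
  show (∑ x ∈ univ.filter (fun x => mkc σ ρ x = O), (vd z x + vd z (ρ x) + vd z (ρ (ρ x)))) = _
  rw [Finset.sum_add_distrib, Finset.sum_add_distrib]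
  have e2 : ∀ x, vd z (ρ x) = vd (ρ (ρ z)) x := fun x => vd_shift hρ3 z x
  have e3' : ∀ x : X, vd (ρ (ρ z)) (ρ x) = vd (ρ z) x := by
    intro x
    rw [vd_shift hρ3 (ρ (ρ z)) x, hρ3 z]
  simp only [e2, e3']
  rw [key1 z, key1 (ρ (ρ z)), key1 (ρ z), mkc_rho, mkc_rho]
  split_ifs
  · decide
  · decide

lemma path_lemma (hσ2 : ∀ x, σ (σ x) = x) (hρ3 : ∀ x, ρ (ρ (ρ x)) = x) :
    ∀ u ∈ Subgroup.closure {σ, ρ}, ∀ z : X,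
    ∃ g : X → F2, (∀ x, g (σ x) = g x) ∧
      ∀ x, g x + g (ρ x) + g (ρ (ρ x)) = vind ρ z x + vind ρ (u z) x := by
  intro u hu
  refine Subgroup.closure_induction ?_ ?_ ?_ ?_ hu
  · intro v hv z
    rw [Set.mem_insert_iff, Set.mem_singleton_iff] at hv
    rcases hv with rfl | rfl
    · -- v = σ (σ has been substituted by v)
      refine ⟨fun x => vd z x + vd (v z) x, fun x => ?_, fun x => ?_⟩
      · show vd z (v x) + vd (v z) (v x) = vd z x + vd (v z) x
        rw [show vd z (v x) = vd (v z) x from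
          vd_congr ⟨fun h => by rw [h]; exact hσ2 x, fun h => by rw [← h]; exact (hσ2 z).symm⟩,
          show vd (v z) (v x) = vd z x from vd_congr v.injective.eq_iff]
        ring
      · show (vd z x + vd (v z) x) + (vd z (ρ x) + vd (v z) (ρ x))
            + (vd z (ρ (ρ x)) + vd (v z) (ρ (ρ x))) = _
        unfold vind; ring
    · -- v = ρ
      refine ⟨0, fun _ => rfl, fun x => ?_⟩
      show (0 : F2) + 0 + 0 = _
      simp [vind_rho_left hρ3, F2_two]
  · intro z
    refine ⟨0, fun _ => rfl, fun x => ?_⟩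
    show (0 : F2) + 0 + 0 = _
    rw [show (1 : Equiv.Perm X) z = z from rfl]
    simp [F2_two]
  · rintro u' v' hu' hv' Pu Pv z
    obtain ⟨g1, hg1σ, hg1⟩ := Pv z
    obtain ⟨g2, hg2σ, hg2⟩ := Pu (v' z)
    refine ⟨g1 + g2, fun x => by simp [hg1σ x, hg2σ x], fun x => ?_⟩
    have e1 := hg1 x
    have e2 := hg2 x
    show (g1 x + g2 x) + (g1 (ρ x) + g2 (ρ x)) + (g1 (ρ (ρ x)) + g2 (ρ (ρ x)))
      = vind ρ z x + vind ρ ((u' * v') z) x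
    rw [show (u' * v') z = u' (v' z) from rfl]
    have h2 : (2 : F2) = 0 := rfl
    linear_combination e1 + e2 + (vind ρ (v' z) x) * h2
  · rintro u' hu' Pu z
    obtain ⟨g, hgσ, hg⟩ := Pu (u'⁻¹ z)
    refine ⟨g, hgσ, fun x => ?_⟩
    have e := hg x
    rw [show u' (u'⁻¹ z) = z from u'.apply_symm_apply z] at e
    rw [e]; ring

end PenroseAux
end P5
section P6
namespace PenroseAux
open Finset
variable {X : Type} [Fintype X] (σ ρ : Equiv.Perm X)

lemma F2_a_aa : ∀ a : F2, a + (a + a) = a := by decide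

open scoped Classical in
lemma build (hσ2 : ∀ x, σ (σ x) = x) (hρ3 : ∀ x, ρ (ρ (ρ x)) = x) (hρf : ∀ x, ρ x ≠ x) :
    ∀ (n : ℕ) (t : X → F2), (univ.filter (fun x => t x ≠ 0)).card ≤ n →
    (∀ x, t (ρ x) = t x) → (∀ O, qC σ ρ t O = 0) →
    ∃ g : X → F2, (∀ x, g (σ x) = g x) ∧ ∀ x, g x + g (ρ x) + g (ρ (ρ x)) = t x := by
  intro n
  induction n with
  | zero =>
    intro t hcard _ _
    have hz : ∀ x, t x = 0 := by
      intro x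
      by_contra hx
      have hmem : x ∈ univ.filter (fun x => t x ≠ 0) := by simp [hx]
      have := card_pos.mpr ⟨x, hmem⟩
      omega
    exact ⟨0, fun _ => rfl, fun x => by simp [hz]⟩
  | succ n ih =>
    intro t hcard htρ htq
    rcases (univ.filter (fun x => t x ≠ 0)).eq_empty_or_nonempty with he | hne
    · have hz : ∀ x, t x = 0 := by
        intro x
        by_contra hx
        rw [eq_empty_iff_forall_notMem] at he
        exact he x (by simp [hx])
      exact ⟨0, fun _ => rfl, fun x => by simp [hz]⟩
    · obtain ⟨x₁, hx₁⟩ := hne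
      have hx₁t : t x₁ ≠ 0 := by simpa using hx₁
      have tvert : ∀ z x, memVert ρ z x → t x = t z := by
        intro z x h
        rcases h with rfl | rfl | rfl
        · rfl
        · exact htρ z
        · rw [htρ (ρ z), htρ z]
      have hex : ∃ x₂, mkc σ ρ x₂ = mkc σ ρ x₁ ∧ t x₂ ≠ 0 ∧ ¬ memVert ρ x₁ x₂ := by
        by_contra hno
        push_neg at hno
        have hsum := htq (mkc σ ρ x₁)
        have d1 : ρ x₁ ≠ x₁ := hρf x₁
        have d2 : ρ (ρ x₁) ≠ x₁ := rho2_ne hρ3 hρf x₁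
        have d3 : ρ (ρ x₁) ≠ ρ x₁ := hρf (ρ x₁)
        have hsub : ({x₁, ρ x₁, ρ (ρ x₁)} : Finset X) ⊆
            univ.filter (fun x => mkc σ ρ x = mkc σ ρ x₁) := by
          intro y hy
          simp only [mem_insert, mem_singleton] at hy
          rcases hy with rfl | rfl | rfl
          · simp
          · simp [mkc_rho]
          · simp [mkc_rho]
        have hzero : ∀ x ∈ univ.filter (fun x => mkc σ ρ x = mkc σ ρ x₁),
            x ∉ ({x₁, ρ x₁, ρ (ρ x₁)} : Finset X) → t x = 0 := by
          intro x hxf hxnot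
          by_contra hxt
          have hv := hno x (by simpa using hxf) hxt
          apply hxnot
          simp only [mem_insert, mem_singleton]
          rcases hv with rfl | rfl | rfl
          · exact Or.inl rfl
          · exact Or.inr (Or.inl rfl)
          · exact Or.inr (Or.inr rfl)
        have heq : qC σ ρ t (mkc σ ρ x₁) = ∑ x ∈ ({x₁, ρ x₁, ρ (ρ x₁)} : Finset X), t x :=
          (Finset.sum_subset hsub hzero).symm
        rw [hsum] at heq
        have hm1 : x₁ ∉ ({ρ x₁, ρ (ρ x₁)} : Finset X) := by
          simp only [mem_insert, mem_singleton]
          push_neg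
          exact ⟨Ne.symm d1, Ne.symm d2⟩
        have hm2 : ρ x₁ ∉ ({ρ (ρ x₁)} : Finset X) := by
          simp only [mem_singleton]
          exact Ne.symm d3
        rw [sum_insert hm1, sum_insert hm2, sum_singleton, htρ (ρ x₁), htρ x₁] at heq
        rw [F2_a_aa] at heq
        exact hx₁t heq.symm
      obtain ⟨x₂, hmk, hx₂t, hnv⟩ := hex
      have horb : x₂ ∈ MulAction.orbit (Subgroup.closure {σ, ρ}) x₁ :=
        (mkc_eq_iff σ ρ x₂ x₁).mp hmk
      obtain ⟨u, hux⟩ := horb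
      have hux' : (u : Equiv.Perm X) x₁ = x₂ := hux
      obtain ⟨g₀, hg₀σ, hg₀⟩ := path_lemma σ ρ hσ2 hρ3 u.1 u.2 x₁
      set t' : X → F2 := fun x => t x + vind ρ x₁ x + vind ρ x₂ x with ht'def
      have hsupp : univ.filter (fun x => t' x ≠ 0) ⊆ (univ.filter (fun x => t x ≠ 0)).erase x₁ := by
        intro x hx
        have hx' : t' x ≠ 0 := by simpa using hx
        by_cases hv1 : memVert ρ x₁ x
        · exfalso
          by_cases hv2 : memVert ρ x₂ x
          · exact hnv (memVert_trans hρ3 hv1 (memVert_symm hρ3 hv2))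
          · apply hx'
            show t x + vind ρ x₁ x + vind ρ x₂ x = 0
            rw [tvert x₁ x hv1, vind_eq_one hρ3 hρf hv1, vind_eq_zero hρ3 hρf hv2,
              F2_ne_zero _ hx₁t]
            decide
        · by_cases hv2 : memVert ρ x₂ x
          · exfalso
            apply hx'
            show t x + vind ρ x₁ x + vind ρ x₂ x = 0
            rw [tvert x₂ x hv2, vind_eq_zero hρ3 hρf hv1, vind_eq_one hρ3 hρf hv2,
              F2_ne_zero _ hx₂t]
            decide
          · have heq : t' x = t x := by
              show t x + vind ρ x₁ x + vind ρ x₂ x = t x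
              rw [vind_eq_zero hρ3 hρf hv1, vind_eq_zero hρ3 hρf hv2]
              ring
            rw [mem_erase]
            constructor
            · rintro rfl
              exact hv1 (Or.inl rfl)
            · rw [heq] at hx'
              simp [hx']
      have hcard' : (univ.filter (fun x => t' x ≠ 0)).card ≤ n := by
        have h1 := card_le_card hsupp
        rw [card_erase_of_mem hx₁] at h1
        omega
      have ht'ρ : ∀ x, t' (ρ x) = t' x := by
        intro x
        show t (ρ x) + vind ρ x₁ (ρ x) + vind ρ x₂ (ρ x) = t x + vind ρ x₁ x + vind ρ x₂ x
        rw [htρ, vind_rho hρ3, vind_rho hρ3]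
      have ht'q : ∀ O, qC σ ρ t' O = 0 := by
        intro O
        have hdec : t' = t + (vind ρ x₁ + vind ρ x₂) := by
          funext x
          show t x + vind ρ x₁ x + vind ρ x₂ x = _
          simp [Pi.add_apply]
          ring
        rw [hdec, map_add, map_add]
        simp only [Pi.add_apply]
        rw [htq O, qC_vind σ ρ hρ3 x₁ O, qC_vind σ ρ hρ3 x₂ O, hmk]
        split_ifs <;> decide
      obtain ⟨g₁, hg₁σ, hg₁⟩ := ih t' hcard' ht'ρ ht'q
      refine ⟨g₀ + g₁, fun x => by simp [hg₀σ x, hg₁σ x], fun x => ?_⟩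
      have e0 := hg₀ x
      rw [hux'] at e0
      have e1 := hg₁ x
      have e1' : g₁ x + g₁ (ρ x) + g₁ (ρ (ρ x)) = t x + vind ρ x₁ x + vind ρ x₂ x := e1
      show (g₀ x + g₁ x) + (g₀ (ρ x) + g₁ (ρ x)) + (g₀ (ρ (ρ x)) + g₁ (ρ (ρ x))) = t x
      have h2 : (2 : F2) = 0 := rfl
      linear_combination e0 + e1' + (vind ρ x₁ x + vind ρ x₂ x) * h2

end PenroseAux
end P6
section P7
namespace PenroseAux
open Finset
variable {X : Type} [Fintype X] (σ ρ : Equiv.Perm X)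

lemma F2_eq_of_add : ∀ a b : F2, a + b = 0 → b = a := by decide

set_option maxHeartbeats 4000000 in
set_option synthInstance.maxHeartbeats 1000000 in
open scoped Classical in
theorem exists_phi (hσ2 : ∀ x, σ (σ x) = x) (hσf : ∀ x, σ x ≠ x)
    (hρ3 : ∀ x, ρ (ρ (ρ x)) = x) (hρf : ∀ x, ρ x ≠ x)
    (hEuler : orbitCount (Subgroup.zpowers ρ) + orbitCount (Subgroup.zpowers (σ * ρ))
      = orbitCount (Subgroup.zpowers σ) + 2 * orbitCount (Subgroup.closure {σ, ρ}))
    (g : X → F2) (hg1 : ∀ x, g (σ x) = g x) (hg2 : ∀ x, g x + g (ρ x) + g (ρ (ρ x)) = 0) :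
    ∃ h : X → F2, (∀ x, h (σ (ρ x)) = h x) ∧ ∀ x, h x + h (σ x) = g x := by
  classical
  have h2 : (2 : F2) = 0 := rfl
  set Fc := invSub (Subgroup.zpowers (σ * ρ)) with hFcdef
  set Ec := invSub (Subgroup.zpowers σ) with hEcdef
  set Vc := invSub (Subgroup.zpowers ρ) with hVcdef
  set Cc := invSub (Subgroup.closure ({σ, ρ} : Set (Equiv.Perm X))) with hCcdef
  have memFc : ∀ h : X → F2, h ∈ Fc ↔ ∀ x, h (σ (ρ x)) = h x := by
    intro h
    rw [hFcdef, mem_invSub_zpowers]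
    constructor <;> intro hh x <;> simpa [Equiv.Perm.mul_apply] using hh x
  have memEc : ∀ h : X → F2, h ∈ Ec ↔ ∀ x, h (σ x) = h x := fun h => mem_invSub_zpowers
  have memVc : ∀ h : X → F2, h ∈ Vc ↔ ∀ x, h (ρ x) = h x := fun h => mem_invSub_zpowers
  have memCc : ∀ h : X → F2, h ∈ Cc ↔ (∀ x, h (σ x) = h x) ∧ (∀ x, h (ρ x) = h x) := by
    intro h
    rw [hCcdef, mem_invSub_closure]
    constructor
    · intro hh
      exact ⟨hh σ (Set.mem_insert _ _), hh ρ (Set.mem_insert_of_mem _ rfl)⟩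
    · rintro ⟨ha, hb⟩ u hu
      rw [Set.mem_insert_iff, Set.mem_singleton_iff] at hu
      rcases hu with rfl | rfl
      · exact ha
      · exact hb
  set W := Ec ⊓ LinearMap.ker (sV ρ) with hWdef
  set Z := Vc ⊓ LinearMap.ker (qC σ ρ) with hZdef
  -- d : restriction of delta to Fc
  set dmap := (delta σ).comp Fc.subtype with hdmapdef
  have hrange_d : LinearMap.range dmap = Submodule.map (delta σ) Fc := by
    rw [hdmapdef, LinearMap.range_comp, Submodule.range_subtype]
  have hCcFc : Cc ≤ Fc := by
    intro h hh
    obtain ⟨ha, hb⟩ := (memCc h).mp hh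
    rw [memFc]
    intro x
    rw [ha (ρ x), hb x]
  have hker_d : LinearMap.ker dmap = Submodule.comap Fc.subtype Cc := by
    ext hx
    obtain ⟨h, hh⟩ := hx
    simp only [LinearMap.mem_ker, Submodule.mem_comap]
    constructor
    · intro h0
      have hσinv : ∀ x, h (σ x) = h x := by
        intro x
        have hx0 : delta σ h x = 0 := by
          have : dmap ⟨h, hh⟩ = 0 := h0
          exact congrFun this x
        exact F2_eq_of_add _ _ hx0
      have hρinv : ∀ x, h (ρ x) = h x := by
        intro x
        rw [← hσinv (ρ x)]
        exact (memFc h).mp hh x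
      exact (memCc h).mpr ⟨hσinv, hρinv⟩
    · intro hc
      have ha := ((memCc h).mp hc).1
      have : delta σ h = 0 := by
        funext x
        show h x + h (σ x) = 0
        rw [ha x]
        exact F2_two _
      exact this
  have hkerd_rank : Module.finrank F2 (LinearMap.ker dmap) = Module.finrank F2 Cc := by
    rw [hker_d]
    exact (Submodule.comapSubtypeEquivOfLe hCcFc).finrank_eq
  have rn_d := LinearMap.finrank_range_add_finrank_ker dmap
  -- t : restriction of sV to Ec
  set tmap := (sV ρ).comp Ec.subtype with htmapdef
  have hWEc : W ≤ Ec := inf_le_left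
  have hker_t : LinearMap.ker tmap = Submodule.comap Ec.subtype W := by
    ext hx
    obtain ⟨h, hh⟩ := hx
    simp only [LinearMap.mem_ker, Submodule.mem_comap, hWdef, Submodule.mem_inf]
    constructor
    · intro h0
      exact ⟨hh, h0⟩
    · intro h0
      exact h0.2
  have hkert_rank : Module.finrank F2 (LinearMap.ker tmap) = Module.finrank F2 W := by
    rw [hker_t]
    exact (Submodule.comapSubtypeEquivOfLe hWEc).finrank_eq
  have rn_t := LinearMap.finrank_range_add_finrank_ker tmap
  -- range of tmap is Z
  have hrt : LinearMap.range tmap = Z := by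
    apply le_antisymm
    · rintro tt ⟨⟨h, hh⟩, rfl⟩
      have hhE : ∀ x, h (σ x) = h x := (memEc h).mp hh
      refine Submodule.mem_inf.mpr ⟨?_, ?_⟩
      · rw [memVc]
        intro x
        show h (ρ x) + h (ρ (ρ x)) + h (ρ (ρ (ρ x))) = h x + h (ρ x) + h (ρ (ρ x))
        rw [hρ3 x]
        ring
      · rw [LinearMap.mem_ker]
        funext O
        show (∑ x ∈ univ.filter (fun x => mkc σ ρ x = O), (h x + h (ρ x) + h (ρ (ρ x)))) = 0
        rw [Finset.sum_add_distrib, Finset.sum_add_distrib]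
        have hre1 : (∑ x ∈ univ.filter (fun x => mkc σ ρ x = O), h (ρ x))
            = ∑ x ∈ univ.filter (fun x => mkc σ ρ x = O), h x := by
          refine Finset.sum_equiv ρ ?_ ?_
          · intro x
            simp [mkc_rho]
          · intro x _
            rfl
        have hre2 : (∑ x ∈ univ.filter (fun x => mkc σ ρ x = O), h (ρ (ρ x)))
            = ∑ x ∈ univ.filter (fun x => mkc σ ρ x = O), h x := by
          refine Finset.sum_equiv (ρ.trans ρ) ?_ ?_
          · intro x
            simp [Equiv.trans_apply, mkc_rho]
          · intro x _
            rfl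
        rw [hre1, hre2]
        have hS0 : (∑ x ∈ univ.filter (fun x => mkc σ ρ x = O), h x) = 0 := by
          apply Finset.sum_involution (fun a _ => σ a)
          · intro a _
            rw [hhE a]
            exact F2_two _
          · intro a _ _
            exact fun hc => hσf a hc
          · intro a ha
            simp only [mem_filter, mem_univ, true_and] at ha ⊢
            rw [mkc_sigma, ha]
          · intro a _
            exact hσ2 a
        rw [hS0]
        norm_num
    · intro tt htt
      obtain ⟨hVcm, hkerq⟩ := Submodule.mem_inf.mp htt
      have hbuild := build σ ρ hσ2 hρ3 hρf (univ.filter (fun x => tt x ≠ 0)).card tt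
        (le_refl _) ((memVc tt).mp hVcm) (fun O => congrFun (LinearMap.mem_ker.mp hkerq) O)
      obtain ⟨gg, hggσ, hggs⟩ := hbuild
      refine ⟨⟨gg, (memEc gg).mpr hggσ⟩, ?_⟩
      funext x
      exact hggs x
  -- r : restriction of qC to Vc
  set rmap := (qC σ ρ).comp Vc.subtype with hrmapdef
  have hZVc : Z ≤ Vc := inf_le_left
  have hker_r : LinearMap.ker rmap = Submodule.comap Vc.subtype Z := by
    ext hx
    obtain ⟨h, hh⟩ := hx
    simp only [LinearMap.mem_ker, Submodule.mem_comap, hZdef, Submodule.mem_inf]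
    constructor
    · intro h0
      exact ⟨hh, h0⟩
    · intro h0
      exact h0.2
  have hkerr_rank : Module.finrank F2 (LinearMap.ker rmap) = Module.finrank F2 Z := by
    rw [hker_r]
    exact (Submodule.comapSubtypeEquivOfLe hZVc).finrank_eq
  have rn_r := LinearMap.finrank_range_add_finrank_ker rmap
  have hrange_r : LinearMap.range rmap = ⊤ := by
    rw [LinearMap.range_eq_top]
    intro c
    refine ⟨⟨fun x => c (mkc σ ρ x) * vind ρ (Quotient.out (mkc σ ρ x)) x, ?_⟩, ?_⟩
    · rw [memVc]
      intro x
      rw [mkc_rho, vind_rho hρ3]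
    · funext O
      show (∑ x ∈ univ.filter (fun x => mkc σ ρ x = O),
        c (mkc σ ρ x) * vind ρ (Quotient.out (mkc σ ρ x)) x) = c O
      rw [Finset.sum_congr rfl (fun x hx => by
        rw [(mem_filter.mp hx).2])]
      rw [← Finset.mul_sum]
      have : (∑ x ∈ univ.filter (fun x => mkc σ ρ x = O), vind ρ (Quotient.out O) x) = 1 := by
        have hq := qC_vind σ ρ hρ3 (Quotient.out O) O
        have hmk : mkc σ ρ (Quotient.out O) = O := Quotient.out_eq O
        rw [hmk] at hq
        exact hq.trans (if_pos rfl)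
      rw [this, mul_one]
  -- map delta Fc ≤ W
  have hsub : Submodule.map (delta σ) Fc ≤ W := by
    rintro tt ⟨h, hh, rfl⟩
    have hfc := (memFc h).mp hh
    refine Submodule.mem_inf.mpr ⟨?_, ?_⟩
    · rw [memEc]
      intro x
      show h (σ x) + h (σ (σ x)) = h x + h (σ x)
      rw [hσ2 x]
      ring
    · rw [LinearMap.mem_ker]
      funext x
      show (h x + h (σ x)) + (h (ρ x) + h (σ (ρ x))) + (h (ρ (ρ x)) + h (σ (ρ (ρ x)))) = 0
      have k1 : h (σ x) = h (ρ (ρ x)) := by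
        have := hfc (ρ (ρ x))
        rw [hρ3 x] at this
        exact this
      have k2 : h (σ (ρ x)) = h x := hfc x
      have k3 : h (σ (ρ (ρ x))) = h (ρ x) := hfc (ρ x)
      rw [k1, k2, k3]
      linear_combination (h x + h (ρ x) + h (ρ (ρ x))) * h2
  -- numerical bookkeeping
  letI : Fintype (Qc σ ρ) := Fintype.ofFinite _
  have hrkQ : Module.finrank F2 ((Qc σ ρ) → F2) = orbitCount (Subgroup.closure ({σ, ρ} : Set (Equiv.Perm X))) := by
    rw [Module.finrank_pi, orbitCount, Nat.card_eq_fintype_card]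
  have hrFc : Module.finrank F2 Fc = orbitCount (Subgroup.zpowers (σ * ρ)) := finrank_invSub _
  have hrEc : Module.finrank F2 Ec = orbitCount (Subgroup.zpowers σ) := finrank_invSub _
  have hrVc : Module.finrank F2 Vc = orbitCount (Subgroup.zpowers ρ) := finrank_invSub _
  have hrCc : Module.finrank F2 Cc = orbitCount (Subgroup.closure ({σ, ρ} : Set (Equiv.Perm X))) := finrank_invSub _
  have hrtop : Module.finrank F2 (LinearMap.range rmap) = orbitCount (Subgroup.closure ({σ, ρ} : Set (Equiv.Perm X))) := by
    rw [hrange_r, ← hrkQ]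
    exact finrank_top F2 _
  -- ranks
  set A := Module.finrank F2 (Submodule.map (delta σ) Fc) with hA
  set B := Module.finrank F2 W with hB
  set Zr := Module.finrank F2 Z with hZr
  have eq_d : A + orbitCount (Subgroup.closure ({σ, ρ} : Set (Equiv.Perm X)))
      = orbitCount (Subgroup.zpowers (σ * ρ)) := by
    rw [← hrFc, ← rn_d, hrange_d, hkerd_rank, hrCc]
  have eq_t : Zr + B = orbitCount (Subgroup.zpowers σ) := by
    rw [← hrEc, ← rn_t, hrt, hkert_rank]
  have eq_r : orbitCount (Subgroup.closure ({σ, ρ} : Set (Equiv.Perm X))) + Zr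
      = orbitCount (Subgroup.zpowers ρ) := by
    rw [← hrVc, ← rn_r, hrtop, hkerr_rank]
  have hAB : B ≤ A := by omega
  have hWeq : Submodule.map (delta σ) Fc = W := Submodule.eq_of_le_of_finrank_le hsub hAB
  have hgW : g ∈ W := by
    refine Submodule.mem_inf.mpr ⟨(memEc g).mpr hg1, ?_⟩
    rw [LinearMap.mem_ker]
    funext x
    exact hg2 x
  rw [← hWeq] at hgW
  obtain ⟨h, hh, hdh⟩ := hgW
  refine ⟨h, (memFc h).mp hh, fun x => ?_⟩
  exact congrFun hdh x

end PenroseAux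
end P7


section P8
namespace PenroseAux
open Finset

lemma fin3_fact1 : ∀ p : Fin 3, p + 2 + 1 = p := by decide
lemma fin3_fact2 : ∀ p : Fin 3, p + 2 + 2 = p + 1 := by decide
lemma fin3_fact3 : ∀ p : Fin 3, p + 1 + 2 = p := by decide
lemma fin3_fact4 : ∀ p : Fin 3, p + 1 + 1 = p + 2 := by decide
lemma fin3_ne12 : ∀ p : Fin 3, p + 1 ≠ p + 2 := by decide

open scoped Classical in
theorem tait_modeq {X : Type} [Fintype X] (m : CombMap X) (hcubic : m.IsCubic)
    (hgenus : m.IsGenusZero) (f : X → Fin 3) (hf : m.IsTaitColoring f) :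
    m.nplus f ≡ m.nminus f [MOD 4] := by
  classical
  set σ := m.sigma with hσdef
  set ρ := m.rho with hρdef
  have hσ2 : ∀ x, σ (σ x) = x := by
    intro x
    have h := m.sigma_invol
    calc σ (σ x) = (σ * σ) x := rfl
    _ = x := by rw [h]; rfl
  have hσf : ∀ x, σ x ≠ x := m.sigma_fixfree
  have hρ3 : ∀ x, ρ (ρ (ρ x)) = x := by
    intro x
    have h := hcubic.1
    calc ρ (ρ (ρ x)) = (ρ * ρ * ρ) x := rfl
    _ = (ρ ^ 3) x := by norm_num [pow_succ, pow_zero, one_mul]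
    _ = x := by rw [h]; rfl
  have hρf : ∀ x, ρ x ≠ x := hcubic.2
  have hρinv : ∀ x, ρ⁻¹ x = ρ (ρ x) := by
    intro x
    rw [Equiv.Perm.inv_eq_iff_eq]
    exact (hρ3 x).symm
  have hρinv2 : ∀ x, ρ⁻¹ (ρ⁻¹ x) = ρ x := by
    intro x
    rw [hρinv x, hρinv (ρ (ρ x)), hρ3 x]
  have hfσ : ∀ x, f (σ x) = f x := hf.1
  -- Tait coloring gives a Klein-flow; decompose in coordinates and apply exists_phi
  have hvertsum : ∀ x, iota (f x) + iota (f (ρ x)) + iota (f (ρ (ρ x))) = 0 := by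
    intro x
    obtain ⟨h1, h2, h3⟩ := hf.2 x
    exact iota_sum (f x) (f (ρ x)) (f (ρ (ρ x))) h1 h2 h3
  have hEuler : orbitCount (Subgroup.zpowers ρ) + orbitCount (Subgroup.zpowers (σ * ρ))
      = orbitCount (Subgroup.zpowers σ) + 2 * orbitCount (Subgroup.closure {σ, ρ}) := hgenus
  obtain ⟨φ1, hφ1f, hφ1e⟩ := exists_phi σ ρ hσ2 hσf hρ3 hρf hEuler
    (fun x => (iota (f x)).1) (fun x => by show (iota (f (σ x))).1 = (iota (f x)).1; rw [hfσ x])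
    (fun x => congrArg Prod.fst (hvertsum x))
  obtain ⟨φ2, hφ2f, hφ2e⟩ := exists_phi σ ρ hσ2 hσf hρ3 hρf hEuler
    (fun x => (iota (f x)).2) (fun x => by show (iota (f (σ x))).2 = (iota (f x)).2; rw [hfσ x])
    (fun x => congrArg Prod.snd (hvertsum x))
  set φ : X → K4 := fun x => (φ1 x, φ2 x) with hφdef
  have hface : ∀ x, φ (σ (ρ x)) = φ x := by
    intro x
    show (φ1 (σ (ρ x)), φ2 (σ (ρ x))) = (φ1 x, φ2 x)
    rw [hφ1f x, hφ2f x]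
  have hedge : ∀ x, φ x + φ (σ x) = iota (f x) := by
    intro x
    show (φ1 x + φ1 (σ x), φ2 x + φ2 (σ x)) = iota (f x)
    rw [hφ1e x, hφ2e x]
  -- the three edge relations around a vertex
  have hA : ∀ y, iota (f y) = φ y + φ (ρ (ρ y)) := by
    intro y
    rw [← hedge y]
    congr 1
    have := hface (ρ (ρ y))
    rw [hρ3 y] at this
    exact this
  have hB : ∀ y, iota (f (ρ y)) = φ (ρ y) + φ y := by
    intro y
    rw [← hedge (ρ y)]
    congr 1
    exact hface y
  have hC : ∀ y, iota (f (ρ (ρ y))) = φ (ρ (ρ y)) + φ (ρ y) := by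
    intro y
    rw [← hedge (ρ (ρ y))]
    congr 1
    exact hface (ρ y)
  have posdef : ∀ y, m.PositiveDart f y ↔ (f (ρ (ρ y)) = f y + 1 ∧ f (ρ y) = f y + 2) := by
    intro y
    unfold CombMap.PositiveDart
    rw [← hρdef, hρinv y, Equiv.Perm.coe_inv, Equiv.symm_apply_apply]
  have negdef : ∀ y, m.NegativeDart f y ↔ (f (ρ (ρ y)) = f y + 2 ∧ f (ρ y) = f y + 1) := by
    intro y
    unfold CombMap.NegativeDart
    rw [← hρdef, hρinv y, Equiv.Perm.coe_inv, Equiv.symm_apply_apply]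
  set u : X → ZMod 4 := fun y =>
    w (φ y) (φ (ρ y)) + w (φ (ρ y)) (φ (ρ (ρ y))) + w (φ (ρ (ρ y))) (φ y) with hudef
  have hu : ∀ y, (m.PositiveDart f y ∧ u y = 1) ∨ (m.NegativeDart f y ∧ u y = -1) := by
    intro y
    rcases key (φ y) (φ (ρ y)) (φ (ρ (ρ y))) (f y) (f (ρ y)) (f (ρ (ρ y)))
      (hA y) (hB y) (hC y) with ⟨⟨e1, e2⟩, hw⟩ | ⟨⟨e1, e2⟩, hw⟩
    · exact Or.inl ⟨(posdef y).mpr ⟨e1, e2⟩, hw⟩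
    · exact Or.inr ⟨(negdef y).mpr ⟨e1, e2⟩, hw⟩
  have hdisj : ∀ y, ¬(m.PositiveDart f y ∧ m.NegativeDart f y) := by
    rintro y ⟨hp, hn⟩
    have h1 := ((posdef y).mp hp).1
    have h2 := ((negdef y).mp hn).1
    rw [h1] at h2
    exact fin3_ne12 (f y) h2
  -- the sum of u is zero
  have hS : (∑ y : X, w (φ y) (φ (ρ y))) = 0 := by
    apply Finset.sum_involution (fun a _ => ρ⁻¹ (σ (ρ a)))
    · intro a _
      have k1 : φ (ρ⁻¹ (σ (ρ a))) = φ (ρ a) := by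
        have := hface (ρ⁻¹ (σ (ρ a)))
        rw [Equiv.Perm.coe_inv, Equiv.apply_symm_apply, hσ2] at this
        exact this.symm
      have k2 : φ (ρ (ρ⁻¹ (σ (ρ a)))) = φ a := by
        rw [Equiv.Perm.coe_inv, Equiv.apply_symm_apply]
        exact hface a
      rw [k1, k2]
      exact w_antisym _ _
    · intro a _ _ hc
      have : σ (ρ a) = ρ a := by
        have := congrArg (⇑ρ) hc
        rwa [Equiv.Perm.coe_inv, Equiv.apply_symm_apply] at this
      exact hσf (ρ a) this
    · intro a _
      exact Finset.mem_univ _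
    · intro a _
      rw [Equiv.Perm.coe_inv, Equiv.apply_symm_apply, hσ2, Equiv.symm_apply_apply]
  have hS2 : (∑ y : X, w (φ (ρ y)) (φ (ρ (ρ y)))) = ∑ y : X, w (φ y) (φ (ρ y)) :=
    Equiv.sum_comp ρ (fun y => w (φ y) (φ (ρ y)))
  have hS3 : (∑ y : X, w (φ (ρ (ρ y))) (φ y)) = ∑ y : X, w (φ y) (φ (ρ y)) := by
    rw [show (∑ y : X, w (φ (ρ (ρ y))) (φ y))
        = ∑ y : X, w (φ (ρ (ρ y))) (φ (ρ (ρ (ρ y)))) from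
      Finset.sum_congr rfl (fun y _ => by rw [hρ3 y])]
    exact Equiv.sum_comp (ρ.trans ρ) (fun y => w (φ y) (φ (ρ y)))
  have husum : (∑ y : X, u y) = 0 := by
    have : (∑ y : X, u y) = (∑ y : X, w (φ y) (φ (ρ y)))
        + (∑ y : X, w (φ (ρ y)) (φ (ρ (ρ y)))) + (∑ y : X, w (φ (ρ (ρ y))) (φ y)) := by
      rw [← Finset.sum_add_distrib, ← Finset.sum_add_distrib]
    rw [this, hS2, hS3, hS]
    norm_num
  -- split the sum by sign
  set P := univ.filter (fun y => m.PositiveDart f y) with hPdef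
  set N := univ.filter (fun y => m.NegativeDart f y) with hNdef
  have hfilterneg : univ.filter (fun y => ¬ m.PositiveDart f y) = N := by
    apply Finset.filter_congr
    intro y _
    constructor
    · intro hnp
      rcases hu y with ⟨hp, _⟩ | ⟨hn, _⟩
      · exact absurd hp hnp
      · exact hn
    · intro hn hp
      exact hdisj y ⟨hp, hn⟩
  have hPu : ∀ y ∈ P, u y = 1 := by
    intro y hy
    have hp := (Finset.mem_filter.mp hy).2
    rcases hu y with ⟨_, h1⟩ | ⟨hn, _⟩
    · exact h1
    · exact (hdisj y ⟨hp, hn⟩).elim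
  have hNu : ∀ y ∈ N, u y = -1 := by
    intro y hy
    have hn := (Finset.mem_filter.mp hy).2
    rcases hu y with ⟨hp, _⟩ | ⟨_, h1⟩
    · exact (hdisj y ⟨hp, hn⟩).elim
    · exact h1
  have hsplit : (∑ y : X, u y) = (P.card : ZMod 4) + (N.card : ZMod 4) * (-1) := by
    rw [← Finset.sum_filter_add_sum_filter_not univ (fun y => m.PositiveDart f y) u, hfilterneg,
      Finset.sum_congr rfl hPu, Finset.sum_congr rfl hNu, Finset.sum_const, Finset.sum_const,
      nsmul_eq_mul, nsmul_eq_mul, mul_one]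
  have hcards : (P.card : ZMod 4) = (N.card : ZMod 4) := by
    have h0 := husum
    rw [hsplit] at h0
    linear_combination h0
  have hmod : P.card ≡ N.card [MOD 4] := (ZMod.natCast_eq_natCast_iff _ _ _).mp hcards
  -- divisibility by 3
  have hPinv : ∀ y ∈ P, ρ y ∈ P := by
    intro y hy
    have hp := (Finset.mem_filter.mp hy).2
    obtain ⟨e1, e2⟩ := (posdef y).mp hp
    refine Finset.mem_filter.mpr ⟨Finset.mem_univ _, (posdef (ρ y)).mpr ⟨?_, ?_⟩⟩
    · rw [hρ3 y, e2]
      exact (fin3_fact1 (f y)).symm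
    · rw [e1, e2]
      exact (fin3_fact2 (f y)).symm
  have hNinv : ∀ y ∈ N, ρ y ∈ N := by
    intro y hy
    have hn := (Finset.mem_filter.mp hy).2
    obtain ⟨e1, e2⟩ := (negdef y).mp hn
    refine Finset.mem_filter.mpr ⟨Finset.mem_univ _, (negdef (ρ y)).mpr ⟨?_, ?_⟩⟩
    · rw [hρ3 y, e2]
      exact (fin3_fact3 (f y)).symm
    · rw [e1, e2]
      exact (fin3_fact4 (f y)).symm
  have hPdvd : 3 ∣ P.card := three_dvd_card ρ hρ3 hρf P.card P (le_refl _) hPinv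
  have hNdvd : 3 ∣ N.card := three_dvd_card ρ hρ3 hρf N.card N (le_refl _) hNinv
  obtain ⟨k, hk⟩ := hPdvd
  obtain ⟨l, hl⟩ := hNdvd
  have hnplus : m.nplus f = k := by
    have hcardP : Nat.card {x // m.PositiveDart f x} = P.card := by
      rw [Nat.card_eq_fintype_card, Fintype.card_subtype]
    unfold CombMap.nplus
    rw [hcardP, hk, Nat.mul_div_cancel_left k (by norm_num)]
  have hnminus : m.nminus f = l := by
    have hcardN : Nat.card {x // m.NegativeDart f x} = N.card := by
      rw [Nat.card_eq_fintype_card, Fintype.card_subtype]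
    unfold CombMap.nminus
    rw [hcardN, hl, Nat.mul_div_cancel_left l (by norm_num)]
  rw [hnplus, hnminus]
  rw [hk, hl] at hmod
  exact Nat.ModEq.cancel_left_of_coprime (by decide) hmod

end PenroseAux
end P8


open Classical in
/-- For a cubic combinatorial map of genus 0 (a plane trivalent graph), the Penrose
number — the sum of the signs `s(f)` over all Tait colorings `f` — equals the total
number of Tait colorings. -/
theorem penrose_number_eq_card_taitColorings {X : Type} [Fintype X] (m : CombMap X)
    (hcubic : m.IsCubic) (hgenus : m.IsGenusZero) :
    ∑ f ∈ Finset.univ.filter (fun f : X → Fin 3 => m.IsTaitColoring f), m.sign f =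
      ((Finset.univ.filter (fun f : X → Fin 3 => m.IsTaitColoring f)).card : ℤ) := by
  classical
  have hone : ∀ f ∈ Finset.univ.filter (fun f : X → Fin 3 => m.IsTaitColoring f),
      m.sign f = 1 := by
    intro f hf
    have htait : m.IsTaitColoring f := (Finset.mem_filter.mp hf).2
    unfold CombMap.sign
    rw [if_pos (PenroseAux.tait_modeq m hcubic hgenus f htait)]
  rw [Finset.sum_congr rfl hone, Finset.sum_const, nsmul_eq_mul, mul_one]
end

section
/- Let (X, σ, ρ) be any finite cubic combinatorial map (genus 0 is not assumed). Then the number of vertices n⁺(f) + n⁻(f) is even, and for every Tait coloring f and every permutation π of the color set {1,2,3}, the sign s(π ∘ f) equals s(f), where s(g) = 1 if n⁺(g) ≡ n⁻(g) (mod 4) and s(g) = −1 otherwise. In other words, the sign of a Tait coloring is invariant under global permutation of the three colors. -/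
open MulAction in
lemma aux_card_eq {X : Type} [Fintype X] (g : Equiv.Perm X) (p : ℕ) (hp : p.Prime)
    (hg : g ^ p = 1) (hfix : ∀ x, g x ≠ x) :
    Nat.card X = orbitCount (Subgroup.zpowers g) * p := by
  classical
  rcases isEmpty_or_nonempty X with hE | ⟨⟨x0⟩⟩
  · haveI : IsEmpty (orbitRel.Quotient (Subgroup.zpowers g) X) :=
      Quotient.instIsEmpty
    simp [orbitCount, Nat.card_of_isEmpty]
  · set G := Subgroup.zpowers g with hG
    have hne : g ≠ 1 := fun h => hfix x0 (by simp [h])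
    have hord : orderOf g = p := by
      rcases (Nat.dvd_prime hp).mp (orderOf_dvd_of_pow_eq_one hg) with h1 | h
      · exact absurd (orderOf_eq_one_iff.mp h1) hne
      · exact h
    have hcardG : Nat.card G = p := by rw [Nat.card_zpowers, hord]
    have hstab : ∀ x : X, stabilizer G x = ⊥ := by
      intro x
      have hdvd : Nat.card (stabilizer G x) ∣ p := hcardG ▸ Subgroup.card_subgroup_dvd_card _
      rcases (Nat.dvd_prime hp).mp hdvd with h1 | hb
      · exact Subgroup.card_eq_one.mp h1
      · exfalso
        have htop : stabilizer G x = ⊤ :=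
          (Subgroup.card_eq_iff_eq_top _).mp (by rw [hb, hcardG])
        have : (⟨g, Subgroup.mem_zpowers g⟩ : G) ∈ stabilizer G x := htop ▸ Subgroup.mem_top _
        have : g • x = x := this
        exact hfix x this
    calc Nat.card X
        = Nat.card (Σ ω : orbitRel.Quotient G X, G ⧸ stabilizer G ω.out) :=
          Nat.card_congr (selfEquivSigmaOrbitsQuotientStabilizer G X)
      _ = Nat.card ((orbitRel.Quotient G X) × (G ⧸ (⊥ : Subgroup G))) := by
          refine Nat.card_congr ((Equiv.sigmaCongrRight fun ω =>
            Equiv.cast (by rw [hstab])).trans (Equiv.sigmaEquivProd _ _))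
      _ = orbitCount G * p := by
          rw [Nat.card_prod, Nat.card_congr (QuotientGroup.quotientBot (G := G)).toEquiv, hcardG]
          rfl


private lemma fin3_cases (a b c : Fin 3) (h1 : b ≠ a) (h2 : c ≠ a) (h3 : c ≠ b) :
    (b = a + 1 ∧ c = a + 2) ∨ (b = a + 2 ∧ c = a + 1) := by revert a b c; decide

private lemma fin3_shift (a b c : Fin 3) :
    (b = a + 1 ∧ c = a + 2) ↔ (a = c + 1 ∧ b = c + 2) := by revert a b c; decide

private lemma fin3_shift' (a b c : Fin 3) :
    (b = a + 2 ∧ c = a + 1) ↔ (a = c + 2 ∧ b = c + 1) := by revert a b c; decide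

private lemma fin3_ne (a : Fin 3) : a + 1 ≠ a + 2 := by revert a; decide

private lemma perm3_classify (π : Equiv.Perm (Fin 3)) :
    (∀ c, π (c + 1) = π c + 1 ∧ π (c + 2) = π c + 2) ∨
      (∀ c, π (c + 1) = π c + 2 ∧ π (c + 2) = π c + 1) := by
  revert π; decide

/-- For any finite cubic combinatorial map (genus 0 not assumed) and any Tait
coloring `f`: the number of vertices, which equals `n⁺(f) + n⁻(f)`, is even, and
for every permutation `π` of the three colors the sign of the recoloring `π ∘ f`
equals the sign of `f`. -/
theorem sign_comp_perm_eq_sign {X : Type} [Fintype X] (m : CombMap X)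
    (hcubic : m.IsCubic) (f : X → Fin 3) (hf : m.IsTaitColoring f) :
    (m.nplus f + m.nminus f = m.numVertices ∧ Even (m.nplus f + m.nminus f)) ∧
      ∀ π : Equiv.Perm (Fin 3), m.sign (fun x => π (f x)) = m.sign f := by
  classical
  obtain ⟨hrho3, hrhofix⟩ := hcubic
  have hrrr : ∀ x, m.rho (m.rho (m.rho x)) = x := by
    intro x
    have h : (m.rho ^ 3) x = (1 : Equiv.Perm X) x := by rw [hrho3]
    simpa [pow_succ, Equiv.Perm.mul_apply] using h
  have hinv : ∀ x, m.rho⁻¹ x = m.rho (m.rho x) := by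
    intro x
    have h : m.rho⁻¹ = m.rho * m.rho := by
      have h1 : (m.rho * m.rho) * m.rho = 1 := by
        rw [← hrho3]; rw [pow_succ, pow_two]
      exact inv_eq_of_mul_eq_one_left h1
    rw [h]; rfl
  have hinv2 : ∀ x, m.rho⁻¹ (m.rho⁻¹ x) = m.rho x := by
    intro x; rw [hinv, hinv, hrrr]
  have hPos : ∀ x, m.PositiveDart f x ↔
      (f (m.rho (m.rho x)) = f x + 1 ∧ f (m.rho x) = f x + 2) := by
    intro x
    unfold CombMap.PositiveDart
    rw [hinv2 x, hinv x]
  have hNeg : ∀ x, m.NegativeDart f x ↔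
      (f (m.rho (m.rho x)) = f x + 2 ∧ f (m.rho x) = f x + 1) := by
    intro x
    unfold CombMap.NegativeDart
    rw [hinv2 x, hinv x]
  have hTait3 : ∀ x, m.PositiveDart f x ∨ m.NegativeDart f x := by
    intro x
    rcases fin3_cases (f x) (f (m.rho (m.rho x))) (f (m.rho x))
        (hf.2 x).2.1 (hf.2 x).1 (fun h => (hf.2 x).2.2 h.symm) with h | h
    · exact Or.inl ((hPos x).mpr h)
    · exact Or.inr ((hNeg x).mpr h)
  have hPN : ∀ x, ¬ (m.PositiveDart f x ∧ m.NegativeDart f x) := by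
    rintro x ⟨hp, hn⟩
    exact fin3_ne (f x) (hp.1.symm.trans hn.1)
  have hPosInv : ∀ x, m.PositiveDart f x ↔ m.PositiveDart f (m.rho x) := by
    intro x
    rw [hPos, hPos, hrrr]
    exact fin3_shift (f x) (f (m.rho (m.rho x))) (f (m.rho x))
  have hNegInv : ∀ x, m.NegativeDart f x ↔ m.NegativeDart f (m.rho x) := by
    intro x
    rw [hNeg, hNeg, hrrr]
    exact fin3_shift' (f x) (f (m.rho (m.rho x))) (f (m.rho x))
  have cardV : Nat.card X = m.numVertices * 3 :=
    aux_card_eq m.rho 3 (by norm_num) hrho3 hrhofix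
  have cardE : Nat.card X = orbitCount (Subgroup.zpowers m.sigma) * 2 :=
    aux_card_eq m.sigma 2 Nat.prime_two (by rw [pow_two]; exact m.sigma_invol)
      m.sigma_fixfree
  have hsub3 : ∀ (P : X → Prop), (∀ x, P x ↔ P (m.rho x)) →
      3 ∣ Nat.card {x : X // P x} := by
    intro P hInv
    set g : Equiv.Perm {x // P x} := m.rho.subtypePerm (fun x => (hInv x).symm) with hgdef
    have hg3 : g ^ 3 = 1 := by
      apply Equiv.ext
      intro y
      refine Subtype.ext ?_
      show (((g ^ 3) y : {x // P x}) : X) = ((1 : Equiv.Perm {x // P x}) y : X)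
      simp only [pow_succ, pow_zero, one_mul, Equiv.Perm.mul_apply, Equiv.Perm.one_apply,
        hgdef, Equiv.Perm.subtypePerm_apply]
      exact hrrr y
    have hgfix : ∀ y, g y ≠ y := by
      intro y hy
      exact hrhofix y.1 (congrArg Subtype.val hy)
    have h := aux_card_eq g 3 (by norm_num) hg3 hgfix
    exact ⟨_, by rw [h, mul_comm]⟩
  obtain ⟨cP, hcP⟩ := hsub3 _ hPosInv
  obtain ⟨cN, hcN⟩ := hsub3 _ hNegInv
  have hcompl : ∀ x, m.NegativeDart f x ↔ ¬ m.PositiveDart f x := by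
    intro x
    constructor
    · exact fun hn hp => hPN x ⟨hp, hn⟩
    · intro hp
      rcases hTait3 x with h | h
      · exact absurd h hp
      · exact h
  have hsum : Nat.card {x // m.PositiveDart f x} + Nat.card {x // m.NegativeDart f x}
      = Nat.card X := by
    rw [Nat.card_congr (Equiv.subtypeEquivRight hcompl), ← Nat.card_sum]
    exact Nat.card_congr (Equiv.sumCompl _)
  have h1 : m.nplus f + m.nminus f = m.numVertices := by
    unfold CombMap.nplus CombMap.nminus
    omega
  refine ⟨⟨h1, ?_⟩, ?_⟩
  · rw [h1, Nat.even_iff]; omega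
  · intro π
    have hπi := π.injective
    have hnp : ∀ (g : X → Fin 3), m.nplus g =
        Nat.card {x : X // m.PositiveDart g x} / 3 := fun _ => rfl
    rcases perm3_classify π with hc | hc
    · have hPeq : ∀ x, m.PositiveDart (fun y => π (f y)) x ↔ m.PositiveDart f x := by
        intro x
        unfold CombMap.PositiveDart
        constructor
        · rintro ⟨ha, hb⟩
          exact ⟨hπi (ha.trans ((hc (f x)).1).symm), hπi (hb.trans ((hc (f x)).2).symm)⟩
        · rintro ⟨ha, hb⟩
          exact ⟨by show π (f (m.rho⁻¹ x)) = π (f x) + _; rw [ha]; exact (hc (f x)).1, by show π (f (m.rho⁻¹ (m.rho⁻¹ x))) = π (f x) + _; rw [hb]; exact (hc (f x)).2⟩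
      have hNeq : ∀ x, m.NegativeDart (fun y => π (f y)) x ↔ m.NegativeDart f x := by
        intro x
        unfold CombMap.NegativeDart
        constructor
        · rintro ⟨ha, hb⟩
          exact ⟨hπi (ha.trans ((hc (f x)).2).symm), hπi (hb.trans ((hc (f x)).1).symm)⟩
        · rintro ⟨ha, hb⟩
          exact ⟨by show π (f (m.rho⁻¹ x)) = π (f x) + _; rw [ha]; exact (hc (f x)).2, by show π (f (m.rho⁻¹ (m.rho⁻¹ x))) = π (f x) + _; rw [hb]; exact (hc (f x)).1⟩
      have e1 : m.nplus (fun y => π (f y)) = m.nplus f := by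
        unfold CombMap.nplus
        rw [Nat.card_congr (Equiv.subtypeEquivRight hPeq)]
      have e2 : m.nminus (fun y => π (f y)) = m.nminus f := by
        unfold CombMap.nminus
        rw [Nat.card_congr (Equiv.subtypeEquivRight hNeq)]
      simp only [CombMap.sign, e1, e2]
    · have hPeq : ∀ x, m.PositiveDart (fun y => π (f y)) x ↔ m.NegativeDart f x := by
        intro x
        unfold CombMap.PositiveDart CombMap.NegativeDart
        constructor
        · rintro ⟨ha, hb⟩
          exact ⟨hπi (ha.trans ((hc (f x)).2).symm), hπi (hb.trans ((hc (f x)).1).symm)⟩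
        · rintro ⟨ha, hb⟩
          exact ⟨by show π (f (m.rho⁻¹ x)) = π (f x) + _; rw [ha]; exact (hc (f x)).2, by show π (f (m.rho⁻¹ (m.rho⁻¹ x))) = π (f x) + _; rw [hb]; exact (hc (f x)).1⟩
      have hNeq : ∀ x, m.NegativeDart (fun y => π (f y)) x ↔ m.PositiveDart f x := by
        intro x
        unfold CombMap.PositiveDart CombMap.NegativeDart
        constructor
        · rintro ⟨ha, hb⟩
          exact ⟨hπi (ha.trans ((hc (f x)).1).symm), hπi (hb.trans ((hc (f x)).2).symm)⟩
        · rintro ⟨ha, hb⟩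
          exact ⟨by show π (f (m.rho⁻¹ x)) = π (f x) + _; rw [ha]; exact (hc (f x)).1, by show π (f (m.rho⁻¹ (m.rho⁻¹ x))) = π (f x) + _; rw [hb]; exact (hc (f x)).2⟩
      have e1 : m.nplus (fun y => π (f y)) = m.nminus f := by
        unfold CombMap.nplus CombMap.nminus
        rw [Nat.card_congr (Equiv.subtypeEquivRight hPeq)]
      have e2 : m.nminus (fun y => π (f y)) = m.nplus f := by
        unfold CombMap.nminus CombMap.nplus
        rw [Nat.card_congr (Equiv.subtypeEquivRight hNeq)]
      simp only [CombMap.sign, e1, e2]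
      exact if_congr ⟨Nat.ModEq.symm, Nat.ModEq.symm⟩ rfl rfl
end

section
/- Let G be a finite 3-regular simple graph that contains a bridge, i.e., an edge e such that the graph obtained from G by deleting e has more connected components than G. Then G admits no Tait coloring: there is no function f from the edge set of G to Fin 3 such that any two distinct edges sharing a vertex receive distinct colors. -/
private lemma even_card_of_invol {α : Type*} [DecidableEq α] (s : Finset α) (g : α → α)
    (hmem : ∀ x ∈ s, g x ∈ s) (hinv : ∀ x ∈ s, g (g x) = x) (hne : ∀ x ∈ s, g x ≠ x) :
    Even s.card := by
  induction s using Finset.strongInduction with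
  | _ s ih =>
    rcases s.eq_empty_or_nonempty with rfl | ⟨a, ha⟩
    · simp
    · have hga := hmem a ha
      have hnea := hne a ha
      have hpair : ({a, g a} : Finset α) ⊆ s := by
        intro x hx; rcases Finset.mem_insert.mp hx with rfl | hx
        · exact ha
        · simpa using Finset.mem_singleton.mp hx ▸ hga
      have hss : s \ {a, g a} ⊂ s :=
        Finset.sdiff_ssubset hpair ⟨a, by simp⟩
      have hmem' : ∀ x ∈ s \ {a, g a}, g x ∈ s \ {a, g a} := by
        intro x hx
        rw [Finset.mem_sdiff] at hx ⊢
        obtain ⟨hxs, hxp⟩ := hx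
        simp only [Finset.mem_insert, Finset.mem_singleton, not_or] at hxp ⊢
        refine ⟨hmem x hxs, ?_, ?_⟩
        · intro h; exact hxp.2 (by rw [← hinv x hxs, h])
        · intro h; exact hxp.1 (by
            have := congrArg g h
            rwa [hinv x hxs, hinv a ha] at this)
      have hev := ih _ hss hmem' (fun x hx => hinv x (Finset.mem_sdiff.mp hx).1)
        (fun x hx => hne x (Finset.mem_sdiff.mp hx).1)
      have hcard : (s \ {a, g a}).card + 2 = s.card := by
        rw [Finset.card_sdiff_of_subset hpair, Finset.card_pair (Ne.symm hnea)]
        have := Finset.card_le_card hpair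
        rw [Finset.card_pair (Ne.symm hnea)] at this
        omega
      rw [← hcard]
      exact hev.add (by decide)

/-- A finite 3-regular simple graph containing a bridge — an edge whose deletion
increases the number of connected components — admits no Tait coloring, i.e. no
function from its edge set to `Fin 3` giving distinct colors to any two distinct
edges sharing a vertex. -/
theorem no_taitColoring_of_isBridge {V : Type} [Fintype V] [DecidableEq V]
    (G : SimpleGraph V) [DecidableRel G.Adj]
    (hreg : G.IsRegularOfDegree 3)
    (hbridge : ∃ e ∈ G.edgeSet,
      Nat.card G.ConnectedComponent <
        Nat.card (G.deleteEdges {e}).ConnectedComponent) :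
    ¬ ∃ f : G.edgeSet → Fin 3,
        ∀ e₁ e₂ : G.edgeSet, e₁ ≠ e₂ →
          (∃ v : V, v ∈ (e₁ : Sym2 V) ∧ v ∈ (e₂ : Sym2 V)) → f e₁ ≠ f e₂ := by
  classical
  rintro ⟨f, hf⟩
  obtain ⟨e₀, he₀, hcard⟩ := hbridge
  induction e₀ using Sym2.ind with
  | _ u v =>
  have hadj : G.Adj u v := G.mem_edgeSet.mp he₀
  set G' := G.deleteEdges {s(u,v)} with hG'
  -- Step 1: u and v are not reachable in G'
  have hnr : ¬ G'.Reachable u v := by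
    intro hr
    have step : ∀ a b : V, G.Adj a b → G'.Reachable a b := by
      intro a b hab
      by_cases h : s(a,b) = s(u,v)
      · rcases Sym2.eq_iff.mp h with ⟨rfl, rfl⟩ | ⟨rfl, rfl⟩
        · exact hr
        · exact hr.symm
      · exact SimpleGraph.Adj.reachable (by
          rw [hG', SimpleGraph.deleteEdges_adj]
          exact ⟨hab, by simpa using h⟩)
    have key : ∀ a b : V, G.Reachable a b → G'.Reachable a b := by
      intro a b hab
      obtain ⟨p⟩ := hab
      induction p with
      | nil => exact SimpleGraph.Reachable.refl _
      | cons h p ih => exact (step _ _ h).trans ih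
    let φ : G'.ConnectedComponent → G.ConnectedComponent :=
      SimpleGraph.ConnectedComponent.map
        (SimpleGraph.Hom.ofLE (G.deleteEdges_le _))
    have hsurj : Function.Surjective φ := by
      intro c
      induction c using SimpleGraph.ConnectedComponent.ind with
      | _ w => exact ⟨G'.connectedComponentMk w, rfl⟩
    have hinj : Function.Injective φ := by
      intro c d
      induction c using SimpleGraph.ConnectedComponent.ind with
      | _ a =>
      induction d using SimpleGraph.ConnectedComponent.ind with
      | _ b =>
      intro hcd
      exact SimpleGraph.ConnectedComponent.sound
        (key a b (SimpleGraph.ConnectedComponent.exact hcd))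
    have := Nat.card_eq_of_bijective φ ⟨hinj, hsurj⟩
    omega
  -- Step 2: at each vertex, for each color there is a unique incident edge of that color
  have huniq : ∀ (w x y : V) (hx : G.Adj w x) (hy : G.Adj w y),
      f ⟨s(w,x), G.mem_edgeSet.mpr hx⟩ = f ⟨s(w,y), G.mem_edgeSet.mpr hy⟩ → x = y := by
    intro w x y hx hy heq
    by_contra hxy
    refine hf _ _ ?_ ⟨w, by simp, by simp⟩ heq
    intro h
    have h' : s(w,x) = s(w,y) := congrArg Subtype.val h
    rcases Sym2.eq_iff.mp h' with ⟨_, h2⟩ | ⟨h1, h2⟩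
    · exact hxy h2
    · subst h2; exact G.loopless.irrefl _ hx
  have hex : ∀ (w : V) (c : Fin 3), ∃ x, ∃ hx : G.Adj w x,
      f ⟨s(w,x), G.mem_edgeSet.mpr hx⟩ = c := by
    intro w c
    have hcard3 : (Finset.univ : Finset (Fin 3)).card ≤ (G.neighborFinset w).card := by
      rw [G.card_neighborFinset_eq_degree, hreg w]; simp
    have := Finset.surj_on_of_inj_on_of_card_le
      (s := G.neighborFinset w) (t := (Finset.univ : Finset (Fin 3)))
      (f := fun x hx => f ⟨s(w,x), G.mem_edgeSet.mpr ((G.mem_neighborFinset w x).mp hx)⟩)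
      (fun _ _ => Finset.mem_univ _)
      (fun x y hx hy h => huniq w x y ((G.mem_neighborFinset w x).mp hx) ((G.mem_neighborFinset w y).mp hy) h) hcard3
    obtain ⟨x, hx, hxc⟩ := this c (Finset.mem_univ c)
    exact ⟨x, (G.mem_neighborFinset w x).mp hx, hxc.symm⟩
  choose m hmadj hmcol using hex
  have hswap : ∀ (a b : V) (h1 : G.Adj a b),
      f ⟨s(b,a), G.mem_edgeSet.mpr h1.symm⟩ = f ⟨s(a,b), G.mem_edgeSet.mpr h1⟩ := by
    intro a b h1
    congr 1
    exact Subtype.ext (Sym2.eq_swap)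
  have hminv : ∀ (w : V) (c : Fin 3), m (m w c) c = w := by
    intro w c
    have := huniq (m w c) (m (m w c) c) w (hmadj _ c) (hmadj w c).symm
    apply this
    rw [hmcol, hswap w (m w c) (hmadj w c), hmcol]
  set c0 := f ⟨s(u,v), he₀⟩ with hc0
  have hmuv : m u c0 = v := by
    apply huniq u (m u c0) v (hmadj u c0) hadj
    rw [hmcol]
  obtain ⟨c1, hc1⟩ : ∃ c1 : Fin 3, c1 ≠ c0 := ⟨c0 + 1, by
    intro h; rw [Fin.ext_iff] at h; simp [Fin.add_def] at h; omega⟩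
  set C : Finset V := Finset.univ.filter (fun w => G'.Reachable u w) with hC
  have hmemC : ∀ w, w ∈ C ↔ G'.Reachable u w := by
    intro w; rw [hC, Finset.mem_filter]; simp
  have huC : u ∈ C := (hmemC u).mpr (SimpleGraph.Reachable.refl u)
  have hvC : v ∉ C := fun h => hnr ((hmemC v).mp h)
  -- color c1 edges: involution on C
  have hevC : Even C.card := by
    apply even_card_of_invol C (fun w => m w c1)
    · intro w hw
      rw [hmemC]
      have hne : s(w, m w c1) ≠ s(u,v) := by
        intro h
        apply hc1
        rw [← hmcol w c1, hc0]
        congr 1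
        exact Subtype.ext h
      have : G'.Adj w (m w c1) := by
        rw [hG', SimpleGraph.deleteEdges_adj]
        exact ⟨hmadj w c1, by simpa using hne⟩
      exact ((hmemC w).mp hw).trans this.reachable
    · intro w _; exact hminv w c1
    · intro w _; exact (hmadj w c1).ne'
  -- color c0 edges: involution on C.erase u
  have hevC' : Even (C.erase u).card := by
    apply even_card_of_invol _ (fun w => m w c0)
    · intro w hw
      obtain ⟨hwu, hwC⟩ := Finset.mem_erase.mp hw
      have hne : s(w, m w c0) ≠ s(u,v) := by
        intro h
        rcases Sym2.eq_iff.mp h with ⟨rfl, _⟩ | ⟨rfl, _⟩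
        · exact hwu rfl
        · exact hvC hwC
      have hadj' : G'.Adj w (m w c0) := by
        rw [hG', SimpleGraph.deleteEdges_adj]
        exact ⟨hmadj w c0, by simpa using hne⟩
      rw [Finset.mem_erase]
      constructor
      · intro h
        apply hvC
        have : w = v := by rw [← hmuv, ← h, hminv]
        rw [← this]; exact hwC
      · exact (hmemC _).mpr (((hmemC w).mp hwC).trans hadj'.reachable)
    · intro w _; exact hminv w c0
    · intro w _; exact (hmadj w c0).ne'
  have := Finset.card_erase_add_one huC
  obtain ⟨k, hk⟩ := hevC
  obtain ⟨l, hl⟩ := hevC'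
  omega
end
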